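/- Let ω ∈ ℝ∖ℚ, and set q'_i the elements of U = {q_j : q_{j+1} ≥ (q_j+1)²} in increasing order, n_i = ⌊q'_{i+1}/(q'_i+1)⌋, α_i = n_i q'_i / q'_{i+1}. Then 1 ≥ α_i ≥ (1 − 1/(q'_i+1))² for all i, and the infinite product ∏_{i≥0} α_i converges to a strictly positive constant. -/

import Mathlib

open Finset Filter


/-- The iterated fractional parts of the Gauss continued fraction algorithm:
`gaussIter ω n = ω_n`. -/
noncomputable def gaussIter (ω : ℝ) : ℕ → ℝ
  | 0 => Int.fract ω
  | n + 1 => Int.fract (gaussIter ω n)⁻¹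

/-- The partial quotients of the Gauss continued fraction algorithm:
`cfA ω 0 = a₀ = ⌊ω⌋`, `cfA ω (n+1) = a_{n+1} = ⌊1/ω_n⌋`. -/
noncomputable def cfA (ω : ℝ) : ℕ → ℤ
  | 0 => ⌊ω⌋
  | n + 1 => ⌊(gaussIter ω n)⁻¹⌋

/-- Denominators of the convergents: `q₋₂ = 1`, `q₋₁ = 0`, `q_n = a_n q_{n-1} + q_{n-2}`
(so `q₀ = 1`, `q₁ = a₁`). They are positive integers. -/
noncomputable def qden (ω : ℝ) : ℕ → ℕ
  | 0 => 1
  | 1 => (cfA ω 1).toNat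
  | n + 2 => (cfA ω (n + 2)).toNat * qden ω (n + 1) + qden ω n

/-- Numerators of the convergents: `p₋₂ = 0`, `p₋₁ = 1`, `p_n = a_n p_{n-1} + p_{n-2}`
(so `p₀ = a₀`, `p₁ = a₁ a₀ + 1`). -/
noncomputable def pnum (ω : ℝ) : ℕ → ℤ
  | 0 => cfA ω 0
  | 1 => cfA ω 1 * cfA ω 0 + 1
  | n + 2 => cfA ω (n + 2) * pnum ω (n + 1) + pnum ω n

/-- The denominators viewed as real numbers. -/
noncomputable def qr (ω : ℝ) (n : ℕ) : ℝ := (qden ω n : ℝ)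

lemma gauss_props (ω : ℝ) (hω : Irrational ω) :
    ∀ n, Irrational (gaussIter ω n) ∧ 0 < gaussIter ω n ∧ gaussIter ω n < 1 := by
  intro n
  induction n with
  | zero =>
    have h1 : Irrational (Int.fract ω) := by
      have he : Int.fract ω = ω - (⌊ω⌋ : ℤ) := rfl
      rw [he]; exact hω.sub_intCast _
    refine ⟨h1, ?_, Int.fract_lt_one ω⟩
    exact lt_of_le_of_ne (Int.fract_nonneg ω) (Ne.symm (by simpa [gaussIter] using h1.ne_int 0))
  | succ n ih =>
    obtain ⟨hi, hpos, hlt⟩ := ih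
    have h1 : Irrational (Int.fract (gaussIter ω n)⁻¹) := by
      have he : Int.fract (gaussIter ω n)⁻¹ =
          (gaussIter ω n)⁻¹ - (⌊(gaussIter ω n)⁻¹⌋ : ℤ) := rfl
      rw [he]; exact hi.inv.sub_intCast _
    refine ⟨h1, ?_, Int.fract_lt_one _⟩
    exact lt_of_le_of_ne (Int.fract_nonneg _) (Ne.symm (by simpa [gaussIter] using h1.ne_int 0))

lemma cfA_succ_pos (ω : ℝ) (hω : Irrational ω) (n : ℕ) : 1 ≤ (cfA ω (n + 1)).toNat := by
  obtain ⟨_, hpos, hlt⟩ := gauss_props ω hω n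
  have h1 : (1 : ℝ) < (gaussIter ω n)⁻¹ := (one_lt_inv₀ hpos).mpr hlt
  have h2 : (1 : ℤ) ≤ ⌊(gaussIter ω n)⁻¹⌋ := by
    rw [Int.le_floor]; exact_mod_cast h1.le
  have : cfA ω (n + 1) = ⌊(gaussIter ω n)⁻¹⌋ := rfl
  omega

lemma qden_le_succ (ω : ℝ) (hω : Irrational ω) (n : ℕ) : qden ω n ≤ qden ω (n + 1) := by
  cases n with
  | zero =>
    have h := cfA_succ_pos ω hω 0
    norm_num at h
    show qden ω 0 ≤ qden ω 1
    simp only [qden]; omega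
  | succ m =>
    have h := cfA_succ_pos ω hω (m + 1)
    show qden ω (m + 1) ≤ (cfA ω (m + 2)).toNat * qden ω (m + 1) + qden ω m
    calc qden ω (m + 1) ≤ (cfA ω (m + 2)).toNat * qden ω (m + 1) :=
          Nat.le_mul_of_pos_left _ h
      _ ≤ _ := Nat.le_add_right _ _

lemma qden_mono (ω : ℝ) (hω : Irrational ω) : Monotone (qden ω) :=
  monotone_nat_of_le_succ (qden_le_succ ω hω)

lemma qden_pos (ω : ℝ) (hω : Irrational ω) (n : ℕ) : 1 ≤ qden ω n := by
  have : qden ω 0 = 1 := rfl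
  calc 1 = qden ω 0 := this.symm
    _ ≤ qden ω n := qden_mono ω hω (Nat.zero_le n)

lemma alpha_bounds (A B : ℕ) (hA : 1 ≤ A) (hB : (A + 1) ^ 2 ≤ B) :
    ((B / (A + 1) : ℕ) : ℝ) * (A : ℝ) / (B : ℝ) ≤ 1 ∧
    (1 - 1 / ((A : ℝ) + 1)) ^ 2 ≤ ((B / (A + 1) : ℕ) : ℝ) * (A : ℝ) / (B : ℝ) := by
  set n := B / (A + 1) with hn
  have hn1 : n * (A + 1) ≤ B := Nat.div_mul_le_self B (A + 1)
  have hn2 : B ≤ (A + 1) * n + A := by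
    conv_lhs => rw [← Nat.div_add_mod B (A + 1)]
    exact Nat.add_le_add_left
      (by have := Nat.mod_lt B (y := A + 1) (Nat.succ_pos A); omega : B % (A + 1) ≤ A) _
  have ha : (1 : ℝ) ≤ (A : ℝ) := by exact_mod_cast hA
  have hb : ((A : ℝ) + 1) ^ 2 ≤ (B : ℝ) := by exact_mod_cast hB
  have h1 : (n : ℝ) * ((A : ℝ) + 1) ≤ (B : ℝ) := by exact_mod_cast hn1
  have h2 : (B : ℝ) ≤ ((A : ℝ) + 1) * (n : ℝ) + (A : ℝ) := by exact_mod_cast hn2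
  have hb0 : (0 : ℝ) < (B : ℝ) := lt_of_lt_of_le (by positivity) hb
  have ha1 : (0 : ℝ) < (A : ℝ) + 1 := by linarith
  have hn0 : (0 : ℝ) ≤ (n : ℝ) := Nat.cast_nonneg n
  constructor
  · rw [div_le_one hb0]; nlinarith
  · have he : 1 - 1 / ((A : ℝ) + 1) = (A : ℝ) / ((A : ℝ) + 1) := by field_simp; ring
    rw [he, div_pow, div_le_div_iff₀ (by positivity) hb0]
    nlinarith [mul_le_mul_of_nonneg_left h2 (mul_nonneg (by linarith : (0:ℝ) ≤ (A:ℝ)) ha1.le),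
      mul_le_mul_of_nonneg_left hb (by linarith : (0:ℝ) ≤ (A:ℝ)), sq_nonneg (A:ℝ)]

/-- with `q'_i = q_{j(i)}` enumerating `U = {q_j : q_{j+1} ≥ (q_j+1)²}`
in increasing order, `n_i = ⌊q'_{i+1}/(q'_i+1)⌋` and `α_i = n_i q'_i/q'_{i+1}`,
one has `1 ≥ α_i ≥ (1 - 1/(q'_i+1))²` and `∏_{i≥0} α_i` converges to a strictly
positive constant. -/
theorem stmt17 (ω : ℝ) (hω : Irrational ω)
    (j : ℕ → ℕ) (hjmono : StrictMono j)
    (hjU : ∀ i : ℕ, (qden ω (j i) + 1) ^ 2 ≤ qden ω (j i + 1))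
    (hjall : ∀ l : ℕ, (qden ω l + 1) ^ 2 ≤ qden ω (l + 1) → ∃ i, j i = l) :
    (∀ i : ℕ,
      ((qden ω (j (i + 1)) / (qden ω (j i) + 1) : ℕ) : ℝ) * qr ω (j i) / qr ω (j (i + 1)) ≤ 1 ∧
      (1 - 1 / (qr ω (j i) + 1)) ^ 2 ≤
        ((qden ω (j (i + 1)) / (qden ω (j i) + 1) : ℕ) : ℝ) * qr ω (j i) / qr ω (j (i + 1))) ∧
    ∃ cst : ℝ, 0 < cst ∧
      Tendsto (fun N : ℕ => ∏ i ∈ Finset.range N,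
          ((qden ω (j (i + 1)) / (qden ω (j i) + 1) : ℕ) : ℝ) * qr ω (j i) / qr ω (j (i + 1)))
        atTop (nhds cst) := by
  have hkey : ∀ i, (qden ω (j i) + 1) ^ 2 ≤ qden ω (j (i + 1)) := fun i =>
    le_trans (hjU i) (qden_mono ω hω (hjmono (Nat.lt_succ_self i)))
  have hbnds : ∀ i : ℕ,
      ((qden ω (j (i + 1)) / (qden ω (j i) + 1) : ℕ) : ℝ) * qr ω (j i) / qr ω (j (i + 1)) ≤ 1 ∧
      (1 - 1 / (qr ω (j i) + 1)) ^ 2 ≤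
        ((qden ω (j (i + 1)) / (qden ω (j i) + 1) : ℕ) : ℝ) * qr ω (j i) / qr ω (j (i + 1)) := by
    intro i
    have := alpha_bounds (qden ω (j i)) (qden ω (j (i + 1))) (qden_pos ω hω _) (hkey i)
    simpa [qr] using this
  refine ⟨hbnds, ?_⟩
  -- growth of the denominators
  have hgrow : ∀ i : ℕ, 2 ^ (i + 1) ≤ qden ω (j i) + 1 := by
    intro i
    induction i with
    | zero => have := qden_pos ω hω (j 0); omega
    | succ i ih =>
      have h1 := hkey i
      have h2 : (2 : ℕ) ^ (i + 2) ≤ (2 ^ (i + 1)) ^ 2 := by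
        rw [← pow_mul]; exact Nat.pow_le_pow_right (by norm_num) (by omega)
      have h3 : ((2 : ℕ) ^ (i + 1)) ^ 2 ≤ (qden ω (j i) + 1) ^ 2 := Nat.pow_le_pow_left ih 2
      calc 2 ^ (i + 1 + 1) = 2 ^ (i + 2) := rfl
        _ ≤ (2 ^ (i + 1)) ^ 2 := h2
        _ ≤ (qden ω (j i) + 1) ^ 2 := h3
        _ ≤ qden ω (j (i + 1)) := h1
        _ ≤ qden ω (j (i + 1)) + 1 := Nat.le_succ _
  set f : ℕ → ℝ := fun i =>
    ((qden ω (j (i + 1)) / (qden ω (j i) + 1) : ℕ) : ℝ) * qr ω (j i) / qr ω (j (i + 1))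
    with hfdef
  have ht : ∀ i : ℕ, 0 < 1 / (qr ω (j i) + 1) ∧ 1 / (qr ω (j i) + 1) ≤ (1/2 : ℝ) ^ (i + 1) := by
    intro i
    have hq1 : (0 : ℝ) < qr ω (j i) + 1 := by
      have := qden_pos ω hω (j i)
      simp only [qr]; positivity
    refine ⟨by positivity, ?_⟩
    have hc : (2 : ℝ) ^ (i + 1) ≤ qr ω (j i) + 1 := by
      have := hgrow i
      simp only [qr]; exact_mod_cast this
    calc 1 / (qr ω (j i) + 1) ≤ 1 / (2 : ℝ) ^ (i + 1) :=
          one_div_le_one_div_of_le (by positivity) hc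
      _ = (1/2 : ℝ) ^ (i + 1) := by rw [one_div_pow]
  have hq : ∀ i : ℕ, 1/4 ≤ f i ∧ 1 - f i ≤ (1/2 : ℝ) ^ i := by
    intro i
    obtain ⟨htp, hts⟩ := ht i
    have hlow := (hbnds i).2
    have hs2 : (1/2 : ℝ) ^ (i + 1) = (1/2 : ℝ) ^ i * (1/2) := pow_succ _ _
    have hsle : (1/2 : ℝ) ^ (i + 1) ≤ 1/2 := by
      calc (1/2 : ℝ) ^ (i + 1) ≤ (1/2 : ℝ) ^ 1 :=
            pow_le_pow_of_le_one (by norm_num) (by norm_num) (by omega)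
        _ = 1/2 := pow_one _
    constructor
    · nlinarith [sq_nonneg (1 / (qr ω (j i) + 1) - 1/2)]
    · nlinarith [sq_nonneg (1 / (qr ω (j i) + 1))]
  have hfpos : ∀ i, (0 : ℝ) < f i := fun i => lt_of_lt_of_le (by norm_num) (hq i).1
  have hfle : ∀ i, f i ≤ 1 := fun i => (hbnds i).1
  have hsum : Summable (fun i => -Real.log (f i)) := by
    refine Summable.of_nonneg_of_le
      (fun i => by rw [neg_nonneg]; exact Real.log_nonpos (hfpos i).le (hfle i))
      (fun i => ?_)
      ((summable_geometric_of_lt_one (r := (1/2 : ℝ)) (by norm_num) (by norm_num)).mul_left 4)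
    have h1 : 1 - (f i)⁻¹ ≤ Real.log (f i) := Real.one_sub_inv_le_log_of_pos (hfpos i)
    have hu4 : (f i)⁻¹ ≤ 4 := by
      rw [inv_le_comm₀ (hfpos i) (by norm_num)]
      linarith [(hq i).1]
    have heq : (f i)⁻¹ - 1 = (1 - f i) * (f i)⁻¹ := by
      rw [sub_mul, one_mul, mul_inv_cancel₀ (hfpos i).ne']
    have h4 : (f i)⁻¹ - 1 ≤ 4 * (1/2 : ℝ) ^ i := by
      rw [heq]
      calc (1 - f i) * (f i)⁻¹ ≤ (1/2 : ℝ) ^ i * 4 :=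
            mul_le_mul (hq i).2 hu4 (inv_nonneg.mpr (hfpos i).le) (by positivity)
        _ = 4 * (1/2 : ℝ) ^ i := by ring
    linarith
  have hlog : Summable (fun i => Real.log (f i)) := by
    have := hsum.neg; simpa using this
  obtain ⟨L, hL⟩ := hlog
  refine ⟨Real.exp L, Real.exp_pos L, ?_⟩
  have h1 := hL.tendsto_sum_nat
  have h2 : Tendsto (fun N => Real.exp (∑ i ∈ Finset.range N, Real.log (f i))) atTop
      (nhds (Real.exp L)) := (Real.continuous_exp.tendsto L).comp h1
  refine Tendsto.congr (fun N => ?_) h2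
  rw [Real.exp_sum]
  exact Finset.prod_congr rfl (fun i _ => Real.exp_log (hfpos i))
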